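/- Let (c₁,B₁),…,(cₘ,Bₘ) be a Brascamp–Lieb datum on ℝⁿ with Σᵢ cᵢ nᵢ = n, and suppose the positive definite n×n matrix A satisfies A⁻¹ = Σᵢ cᵢ Bᵢ* (Bᵢ A Bᵢ*)⁻¹ Bᵢ. Then the functions fᵢ(x) = exp(−⟨Bᵢ A Bᵢ* x, x⟩/2) on ℝ^{nᵢ} and f(x) = exp(−⟨A x, x⟩/2) on ℝⁿ satisfy ∏ᵢ fᵢ(xᵢ)^{cᵢ} ≤ f(Σᵢ cᵢ Bᵢ* xᵢ) for all (x₁,…,xₘ), and they achieve equality in the reversed Brascamp–Lieb inequality: ∏ᵢ (∫_{ℝ^{nᵢ}} fᵢ dx)^{cᵢ} = C_r ∫_{ℝⁿ} f dx, where C_r = (det(A) / ∏ᵢ det(Bᵢ A Bᵢ*)^{cᵢ})^{1/2}. -/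

import Mathlib

open MeasureTheory Matrix

lemma myDotTrans {k n : ℕ} (N : Matrix (Fin k) (Fin n) ℝ) (u : Fin n → ℝ) (v : Fin k → ℝ) :
    u ⬝ᵥ (Nᵀ *ᵥ v) = (N *ᵥ u) ⬝ᵥ v := by
  rw [dotProduct_mulVec, vecMul_transpose]

lemma myDotTrans' {k n : ℕ} (N : Matrix (Fin k) (Fin n) ℝ) (u : Fin k → ℝ) (v : Fin n → ℝ) :
    u ⬝ᵥ (N *ᵥ v) = (Nᵀ *ᵥ u) ⬝ᵥ v := by
  rw [dotProduct_mulVec, ← mulVec_transpose]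

lemma myDotSumSmul {n : ℕ} {ι : Type*} [Fintype ι] (v : Fin n → ℝ) (c : ι → ℝ)
    (w : ι → Fin n → ℝ) :
    v ⬝ᵥ (∑ i, c i • w i) = ∑ i, c i * (v ⬝ᵥ w i) := by
  simp only [dotProduct, Finset.sum_apply, Pi.smul_apply, smul_eq_mul, Finset.mul_sum]
  rw [Finset.sum_comm]
  exact Finset.sum_congr rfl fun i _ => Finset.sum_congr rfl fun j _ => by ring

lemma mySumSmulMulVec {n : ℕ} {ι : Type*} [Fintype ι] (c : ι → ℝ)
    (N : ι → Matrix (Fin n) (Fin n) ℝ) (g : Fin n → ℝ) :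
    (∑ i, c i • N i) *ᵥ g = ∑ i, c i • (N i *ᵥ g) := by
  ext j
  simp only [mulVec, dotProduct, Finset.sum_apply, Matrix.sum_apply, Pi.smul_apply,
    Matrix.smul_apply, smul_eq_mul, Finset.sum_mul, Finset.mul_sum]
  rw [Finset.sum_comm]
  exact Finset.sum_congr rfl fun i _ => Finset.sum_congr rfl fun j _ => by ring

lemma myBTinj {k n : ℕ} {B : Matrix (Fin k) (Fin n) ℝ}
    (hB : Function.Surjective B.mulVec) {v : Fin k → ℝ} (hv : Bᵀ *ᵥ v = 0) : v = 0 := by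
  obtain ⟨u, hu⟩ := hB v
  have h : v ⬝ᵥ v = 0 := by
    calc v ⬝ᵥ v = (B *ᵥ u) ⬝ᵥ v := by rw [hu]
    _ = u ⬝ᵥ (Bᵀ *ᵥ v) := (myDotTrans B u v).symm
    _ = 0 := by rw [hv, dotProduct_zero]
  exact dotProduct_self_eq_zero.mp h

lemma myBABT_posDef {k n : ℕ} {A : Matrix (Fin n) (Fin n) ℝ} (hA : A.PosDef)
    (B : Matrix (Fin k) (Fin n) ℝ) (hB : Function.Surjective B.mulVec) :
    (B * A * Bᵀ).PosDef := by
  have hAt : Aᵀ = A := by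
    have := hA.isHermitian
    rwa [Matrix.IsHermitian, conjTranspose_eq_transpose_of_trivial] at this
  refine posDef_iff_dotProduct_mulVec.mpr ⟨?_, ?_⟩
  · rw [Matrix.IsHermitian, conjTranspose_eq_transpose_of_trivial]
    simp [transpose_mul, hAt, Matrix.mul_assoc]
  · intro v hv
    have hu : Bᵀ *ᵥ v ≠ 0 := fun h => hv (myBTinj hB h)
    have hstu : star (Bᵀ *ᵥ v) = Bᵀ *ᵥ v := funext fun j => star_trivial _
    have hpos := hA.dotProduct_mulVec_pos hu
    rw [hstu] at hpos
    have hst : star v = v := funext fun j => star_trivial _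
    rw [hst]
    calc (0:ℝ) < (Bᵀ *ᵥ v) ⬝ᵥ (A *ᵥ (Bᵀ *ᵥ v)) := hpos
    _ = v ⬝ᵥ (B *ᵥ (A *ᵥ (Bᵀ *ᵥ v))) := (myDotTrans' B v _).symm
    _ = v ⬝ᵥ ((B * A * Bᵀ) *ᵥ v) := by rw [mulVec_mulVec, mulVec_mulVec]

lemma mySqrtPow {a : ℝ} (ha : 0 ≤ a) (k : ℕ) : Real.sqrt (a ^ k) = (Real.sqrt a) ^ k := by
  induction k with
  | zero => simp
  | succ k ih => rw [pow_succ, pow_succ, Real.sqrt_mul (pow_nonneg ha k), ih]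

lemma myIntegralCompMulVec {k : ℕ} (T : Matrix (Fin k) (Fin k) ℝ) (hT : T.det ≠ 0)
    (g : (Fin k → ℝ) → ℝ) (hg : Continuous g) :
    ∫ x : Fin k → ℝ, g (T *ᵥ x) = |T.det|⁻¹ * ∫ x : Fin k → ℝ, g x := by
  have hlin : LinearMap.det (Matrix.toLin' T) = T.det := LinearMap.det_toLin' T
  have hdet : LinearMap.det (Matrix.toLin' T) ≠ 0 := by rwa [hlin]
  have hmap := Real.map_linearMap_volume_pi_eq_smul_volume_pi hdet
  have hφ : Measurable fun x : Fin k → ℝ => Matrix.toLin' T x :=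
    (LinearMap.continuous_on_pi _).measurable
  have h1 : ∫ x : Fin k → ℝ, g (T *ᵥ x) = ∫ x : Fin k → ℝ, g (Matrix.toLin' T x) := by
    simp [Matrix.toLin'_apply]
  rw [h1, ← MeasureTheory.integral_map hφ.aemeasurable hg.aestronglyMeasurable, hmap,
    MeasureTheory.integral_smul_measure, hlin, ENNReal.toReal_ofReal (by positivity),
    smul_eq_mul, abs_inv]

open scoped MatrixOrder in
lemma myGaussInt {k : ℕ} (M : Matrix (Fin k) (Fin k) ℝ) (hM : M.PosDef) :
    ∫ x : Fin k → ℝ, Real.exp (-(M *ᵥ x ⬝ᵥ x) / 2) =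
      Real.sqrt ((2 * Real.pi) ^ k / M.det) := by
  have hdetM : 0 < M.det := hM.det_pos
  have hdetMu : IsUnit M.det := hdetM.ne'.isUnit
  have hMinv : (M⁻¹).PosDef := hM.inv
  set T := CFC.sqrt (M⁻¹) with hTdef
  have hT : T.PosSemidef := (CFC.sqrt_nonneg _).posSemidef
  have hTT : T * T = M⁻¹ := CFC.sqrt_mul_sqrt_self _ hMinv.posSemidef.nonneg
  have hdetT2 : T.det * T.det = (M.det)⁻¹ := by
    rw [← det_mul, hTT, det_nonsing_inv, Ring.inverse_eq_inv]
  have hdetT_nonneg : 0 ≤ T.det := by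
    rw [hT.isHermitian.det_eq_prod_eigenvalues]
    exact Finset.prod_nonneg fun i _ => by exact_mod_cast hT.eigenvalues_nonneg i
  have hdetT_pos : 0 < T.det := by
    rcases hdetT_nonneg.lt_or_eq with h | h
    · exact h
    · exfalso
      have : (M.det)⁻¹ = 0 := by rw [← hdetT2, ← h, mul_zero]
      exact (inv_pos.mpr hdetM).ne' this
  have hdetTu : IsUnit T.det := hdetT_pos.ne'.isUnit
  have h1 : (M * T) * T = 1 := by rw [mul_assoc, hTT, mul_nonsing_inv _ hdetMu]
  have h2 : T * (T * M) = 1 := by rw [← mul_assoc, hTT, nonsing_inv_mul _ hdetMu]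
  have hTi1 : T⁻¹ = M * T := inv_eq_left_inv h1
  have hTMT : T * M * T = 1 := by
    rw [mul_assoc, ← hTi1, mul_nonsing_inv _ hdetTu]
  have hTt : Tᵀ = T := by
    have := hT.isHermitian
    rwa [Matrix.IsHermitian, conjTranspose_eq_transpose_of_trivial] at this
  have hq : Continuous fun x : Fin k → ℝ => M *ᵥ x ⬝ᵥ x := by
    simp only [mulVec, dotProduct]
    exact continuous_finset_sum _ fun j _ =>
      (continuous_finset_sum _ fun l _ =>
        (continuous_const.mul (continuous_apply l))).mul (continuous_apply j)
  have hg : Continuous fun x : Fin k → ℝ => Real.exp (-(M *ᵥ x ⬝ᵥ x) / 2) :=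
    Real.continuous_exp.comp ((hq.neg).div_const 2)
  have hkey : ∀ x : Fin k → ℝ, M *ᵥ (T *ᵥ x) ⬝ᵥ (T *ᵥ x) = x ⬝ᵥ x := by
    intro x
    calc M *ᵥ (T *ᵥ x) ⬝ᵥ (T *ᵥ x) = ((M * T) *ᵥ x) ⬝ᵥ (T *ᵥ x) := by rw [mulVec_mulVec]
    _ = ((T *ᵥ ((M * T) *ᵥ x))) ⬝ᵥ x := by
        rw [myDotTrans' T ((M * T) *ᵥ x) x, hTt]
    _ = ((T * (M * T)) *ᵥ x) ⬝ᵥ x := by rw [mulVec_mulVec]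
    _ = x ⬝ᵥ x := by rw [← mul_assoc, hTMT, one_mulVec]
  have hcov := myIntegralCompMulVec T hdetT_pos.ne' _ hg
  have hsub : (∫ x : Fin k → ℝ, Real.exp (-(M *ᵥ (T *ᵥ x) ⬝ᵥ (T *ᵥ x)) / 2)) =
      ∫ x : Fin k → ℝ, Real.exp (-(x ⬝ᵥ x) / 2) := by
    congr 1
    funext x
    rw [hkey x]
  have hstd : ∫ x : Fin k → ℝ, Real.exp (-(x ⬝ᵥ x) / 2) = (Real.sqrt (2 * Real.pi)) ^ k := by
    have h1 : ∀ x : Fin k → ℝ, Real.exp (-(x ⬝ᵥ x) / 2) = ∏ i, Real.exp (-(1/2) * (x i) ^ 2) := by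
      intro x
      rw [← Real.exp_sum]
      congr 1
      simp only [dotProduct]
      have h2 : ∑ i, x i * x i = ∑ i, (x i) ^ 2 :=
        Finset.sum_congr rfl fun i _ => (sq (x i)).symm
      rw [h2, ← Finset.mul_sum]
      ring
    calc ∫ x : Fin k → ℝ, Real.exp (-(x ⬝ᵥ x) / 2)
        = ∫ x : Fin k → ℝ, ∏ i, Real.exp (-(1/2) * (x i) ^ 2) := by simp only [h1]
    _ = (∫ t : ℝ, Real.exp (-(1/2) * t ^ 2)) ^ (Fintype.card (Fin k)) :=
        integral_fintype_prod_eq_pow (ι := Fin k) (fun t : ℝ => Real.exp (-(1/2) * t ^ 2))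
    _ = (Real.sqrt (2 * Real.pi)) ^ k := by
        rw [integral_gaussian, Fintype.card_fin]
        norm_num
        rw [mul_comm]
  have hmain : ∫ x : Fin k → ℝ, Real.exp (-(M *ᵥ x ⬝ᵥ x) / 2)
      = T.det * (Real.sqrt (2 * Real.pi)) ^ k := by
    have := hcov
    rw [hsub, hstd] at this
    rw [abs_of_pos hdetT_pos] at this
    field_simp at this ⊢
    linarith [this]
  rw [hmain]
  have hTdeteq : T.det = Real.sqrt (M.det⁻¹) := by
    rw [← hdetT2, Real.sqrt_mul_self hdetT_nonneg]
  rw [hTdeteq, div_eq_mul_inv,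
    Real.sqrt_mul (by positivity : (0:ℝ) ≤ (2 * Real.pi) ^ k) (M.det)⁻¹,
    mySqrtPow (by positivity : (0:ℝ) ≤ 2 * Real.pi)]
  ring
/-- **Equality case in the reversed Brascamp–Lieb inequality** (Theorem 4 of the paper).
Under the condition `A⁻¹ = ∑ cᵢ Bᵢ* (Bᵢ A Bᵢ*)⁻¹ Bᵢ`, the Gaussian functions
`fᵢ(x) = exp(−⟨Bᵢ A Bᵢ* x, x⟩/2)` and `f(x) = exp(−⟨A x, x⟩/2)` satisfy the splitting
hypothesis and achieve equality in the reversed Brascamp–Lieb inequality with constant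
`C_r = (det A / ∏ det (Bᵢ A Bᵢ*)^{cᵢ})^{1/2}`. -/
theorem reversed_brascamp_lieb_equality_case
    (m n : ℕ) (ni : Fin m → ℕ) (c : Fin m → ℝ) (hc : ∀ i, 0 < c i)
    (B : ∀ i, Matrix (Fin (ni i)) (Fin n) ℝ)
    (hB : ∀ i, Function.Surjective (B i).mulVec)
    (hdim : ∑ i, c i * (ni i : ℝ) = (n : ℝ))
    (A : Matrix (Fin n) (Fin n) ℝ) (hA : A.PosDef)
    (hjohn : A⁻¹ = ∑ i, c i • ((B i)ᵀ * (B i * A * (B i)ᵀ)⁻¹ * B i))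
    (f : ∀ i, (Fin (ni i) → ℝ) → ℝ) (F : (Fin n → ℝ) → ℝ)
    (hf : ∀ i x, f i x = Real.exp (- ((B i * A * (B i)ᵀ).mulVec x ⬝ᵥ x) / 2))
    (hF : ∀ x, F x = Real.exp (- (A.mulVec x ⬝ᵥ x) / 2)) :
    (∀ x : ∀ i, Fin (ni i) → ℝ,
      ∏ i, (f i (x i)) ^ (c i) ≤ F (∑ i, c i • (B i)ᵀ.mulVec (x i))) ∧
    ∏ i, (∫ y : Fin (ni i) → ℝ, f i y) ^ (c i) =
      Real.sqrt (A.det / ∏ i, ((B i * A * (B i)ᵀ).det) ^ (c i)) *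
        ∫ x : Fin n → ℝ, F x := by
  have hMpd : ∀ i, (B i * A * (B i)ᵀ).PosDef := fun i => myBABT_posDef hA (B i) (hB i)
  have hAdet : 0 < A.det := hA.det_pos
  have hAu : IsUnit A.det := hAdet.ne'.isUnit
  have hdetMi : ∀ i, IsUnit (B i * A * (B i)ᵀ).det := fun i => (hMpd i).det_pos.ne'.isUnit
  have hMt : ∀ i, (B i * A * (B i)ᵀ)ᵀ = B i * A * (B i)ᵀ := by
    intro i
    have := (hMpd i).isHermitian
    rwa [Matrix.IsHermitian, conjTranspose_eq_transpose_of_trivial] at this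
  constructor
  · -- pointwise inequality
    intro x
    set y : Fin n → ℝ := ∑ i, c i • (B i)ᵀ.mulVec (x i) with hy
    have key : A *ᵥ y ⬝ᵥ y ≤ ∑ i, c i * ((B i * A * (B i)ᵀ) *ᵥ (x i) ⬝ᵥ (x i)) := by
      set g : Fin n → ℝ := A *ᵥ y with hgdef
      set q : Fin m → ℝ := fun i => (B i * A * (B i)ᵀ) *ᵥ (x i) ⬝ᵥ (x i) with hq
      set r : Fin m → ℝ := fun i => (B i *ᵥ g) ⬝ᵥ (x i) with hrdef
      set s : Fin m → ℝ := fun i => (B i *ᵥ g) ⬝ᵥ ((B i * A * (B i)ᵀ)⁻¹ *ᵥ (B i *ᵥ g))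
        with hsdef
      have hexp : ∀ i, 0 ≤ q i - 2 * r i + s i := by
        intro i
        set M : Matrix (Fin (ni i)) (Fin (ni i)) ℝ := B i * A * (B i)ᵀ with hM
        set w : Fin (ni i) → ℝ := M⁻¹ *ᵥ (B i *ᵥ g) with hw
        have hMw : M *ᵥ w = B i *ᵥ g := by
          rw [hw, mulVec_mulVec, mul_nonsing_inv _ (hdetMi i), one_mulVec]
        have h0 : 0 ≤ (M *ᵥ (x i - w)) ⬝ᵥ (x i - w) := by
          have h := (hMpd i).posSemidef.dotProduct_mulVec_nonneg (x i - w)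
          have hst : star (x i - w) = x i - w := funext fun j => star_trivial _
          rw [hst] at h
          rwa [dotProduct_comm]
        have hxw : (M *ᵥ x i) ⬝ᵥ w = r i := by
          calc (M *ᵥ x i) ⬝ᵥ w = x i ⬝ᵥ (Mᵀ *ᵥ w) := (myDotTrans M (x i) w).symm
          _ = x i ⬝ᵥ (M *ᵥ w) := by rw [hM, hMt i]
          _ = x i ⬝ᵥ (B i *ᵥ g) := by rw [hMw]
          _ = r i := dotProduct_comm _ _
        have hexpand : (M *ᵥ (x i - w)) ⬝ᵥ (x i - w) = q i - 2 * r i + s i := by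
          rw [mulVec_sub, sub_dotProduct, dotProduct_sub, dotProduct_sub, hMw, hxw]
          have hqi : (M *ᵥ x i) ⬝ᵥ x i = q i := rfl
          have hri : (B i *ᵥ g) ⬝ᵥ x i = r i := rfl
          have hsi : (B i *ᵥ g) ⬝ᵥ w = s i := rfl
          rw [hqi, hri, hsi]
          ring
        rw [hexpand] at h0
        exact h0
      have hr : ∑ i, c i * r i = g ⬝ᵥ y := by
        have h1 : ∀ i, r i = g ⬝ᵥ ((B i)ᵀ *ᵥ x i) := fun i => (myDotTrans (B i) g (x i)).symm
        calc ∑ i, c i * r i = ∑ i, c i * (g ⬝ᵥ ((B i)ᵀ *ᵥ x i)) := by simp_rw [h1]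
        _ = g ⬝ᵥ (∑ i, c i • ((B i)ᵀ *ᵥ x i)) := (myDotSumSmul g c _).symm
        _ = g ⬝ᵥ y := rfl
      have hs : ∑ i, c i * s i = g ⬝ᵥ y := by
        have h1 : ∀ i, s i = g ⬝ᵥ (((B i)ᵀ * (B i * A * (B i)ᵀ)⁻¹ * B i) *ᵥ g) := by
          intro i
          calc s i = (B i *ᵥ g) ⬝ᵥ ((B i * A * (B i)ᵀ)⁻¹ *ᵥ (B i *ᵥ g)) := rfl
          _ = g ⬝ᵥ ((B i)ᵀ *ᵥ ((B i * A * (B i)ᵀ)⁻¹ *ᵥ (B i *ᵥ g))) :=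
              (myDotTrans (B i) g _).symm
          _ = g ⬝ᵥ (((B i)ᵀ * (B i * A * (B i)ᵀ)⁻¹ * B i) *ᵥ g) := by
              rw [mulVec_mulVec, mulVec_mulVec]
        calc ∑ i, c i * s i
            = ∑ i, c i * (g ⬝ᵥ (((B i)ᵀ * (B i * A * (B i)ᵀ)⁻¹ * B i) *ᵥ g)) := by simp_rw [h1]
        _ = g ⬝ᵥ (∑ i, c i • (((B i)ᵀ * (B i * A * (B i)ᵀ)⁻¹ * B i) *ᵥ g)) :=
            (myDotSumSmul g c _).symm
        _ = g ⬝ᵥ ((∑ i, c i • ((B i)ᵀ * (B i * A * (B i)ᵀ)⁻¹ * B i)) *ᵥ g) := by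
            rw [mySumSmulMulVec]
        _ = g ⬝ᵥ (A⁻¹ *ᵥ g) := by rw [← hjohn]
        _ = g ⬝ᵥ y := by
            rw [hgdef, mulVec_mulVec, nonsing_inv_mul _ hAu, one_mulVec]
      have hsum0 : 0 ≤ ∑ i, c i * (q i - 2 * r i + s i) :=
        Finset.sum_nonneg fun i _ => mul_nonneg (hc i).le (hexp i)
      have hdist : ∑ i, c i * (q i - 2 * r i + s i)
          = (∑ i, c i * q i) - 2 * (∑ i, c i * r i) + ∑ i, c i * s i := by
        rw [Finset.sum_congr rfl
          (fun i _ => by ring :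
            ∀ i ∈ Finset.univ, c i * (q i - 2 * r i + s i)
              = c i * q i - 2 * (c i * r i) + c i * s i),
          Finset.sum_add_distrib, Finset.sum_sub_distrib, ← Finset.mul_sum]
      rw [hdist, hr, hs] at hsum0
      have hgy : g ⬝ᵥ y = A *ᵥ y ⬝ᵥ y := rfl
      rw [hgy] at hsum0
      linarith
    rw [hF]
    have hprod : ∏ i, (f i (x i)) ^ (c i)
        = Real.exp (∑ i, (-((B i * A * (B i)ᵀ) *ᵥ (x i) ⬝ᵥ (x i)) / 2) * c i) := by
      rw [Real.exp_sum]
      refine Finset.prod_congr rfl fun i _ => ?_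
      rw [hf i (x i), Real.rpow_def_of_pos (Real.exp_pos _), Real.log_exp]
    rw [hprod]
    apply Real.exp_le_exp.mpr
    have hsumeq : ∑ i, (-((B i * A * (B i)ᵀ) *ᵥ (x i) ⬝ᵥ (x i)) / 2) * c i
        = -(∑ i, c i * ((B i * A * (B i)ᵀ) *ᵥ (x i) ⬝ᵥ (x i))) / 2 := by
      rw [Finset.sum_congr rfl
        (fun i _ => by ring :
          ∀ i ∈ Finset.univ, (-((B i * A * (B i)ᵀ) *ᵥ (x i) ⬝ᵥ (x i)) / 2) * c i
            = -(c i * ((B i * A * (B i)ᵀ) *ᵥ (x i) ⬝ᵥ (x i))) / 2),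
        ← Finset.sum_div, Finset.sum_neg_distrib]
    rw [hsumeq]
    linarith [key]
  · -- integral equality
    have hint : ∀ i, (∫ v : Fin (ni i) → ℝ, f i v)
        = Real.sqrt ((2 * Real.pi) ^ (ni i) / (B i * A * (B i)ᵀ).det) := by
      intro i
      simp only [hf]
      exact myGaussInt _ (hMpd i)
    have hintF : (∫ v : Fin n → ℝ, F v) = Real.sqrt ((2 * Real.pi) ^ n / A.det) := by
      simp only [hF]
      exact myGaussInt A hA
    rw [hintF, Finset.prod_congr rfl fun i _ => by rw [hint i]]
    -- now pure real computation
    have hP : (0:ℝ) < 2 * Real.pi := by positivity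
    have hD : ∀ i, 0 < (B i * A * (B i)ᵀ).det := fun i => (hMpd i).det_pos
    have hsqrt_exp : ∀ t : ℝ, 0 < t → Real.sqrt t = Real.exp (Real.log t / 2) := by
      intro t ht
      rw [← Real.exp_log (Real.sqrt_pos.2 ht), Real.log_sqrt ht.le]
    have hprodD : 0 < ∏ i, ((B i * A * (B i)ᵀ).det) ^ (c i) :=
      Finset.prod_pos fun i _ => Real.rpow_pos_of_pos (hD i) _
    have hlogprod : Real.log (∏ i, ((B i * A * (B i)ᵀ).det) ^ (c i))
        = ∑ i, c i * Real.log ((B i * A * (B i)ᵀ).det) := by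
      rw [Real.log_prod (fun i _ => (Real.rpow_pos_of_pos (hD i) _).ne')]
      exact Finset.sum_congr rfl fun i _ => Real.log_rpow (hD i) _
    calc ∏ i, (Real.sqrt ((2 * Real.pi) ^ (ni i) / (B i * A * (B i)ᵀ).det)) ^ (c i)
        = ∏ i, Real.exp ((((ni i : ℝ) * Real.log (2 * Real.pi)
            - Real.log ((B i * A * (B i)ᵀ).det)) / 2) * c i) := by
          refine Finset.prod_congr rfl fun i _ => ?_
          rw [hsqrt_exp _ (div_pos (by positivity) (hD i)),
            Real.rpow_def_of_pos (Real.exp_pos _), Real.log_exp,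
            Real.log_div (by positivity) (hD i).ne', Real.log_pow]
    _ = Real.exp (∑ i, (((ni i : ℝ) * Real.log (2 * Real.pi)
            - Real.log ((B i * A * (B i)ᵀ).det)) / 2) * c i) := (Real.exp_sum _ _).symm
    _ = Real.sqrt (A.det / ∏ i, ((B i * A * (B i)ᵀ).det) ^ (c i))
          * Real.sqrt ((2 * Real.pi) ^ n / A.det) := by
        rw [hsqrt_exp _ (by positivity), hsqrt_exp _ (by positivity),
          ← Real.exp_add]
        congr 1
        rw [Real.log_div hAdet.ne' hprodD.ne', hlogprod,
          Real.log_div (by positivity) hAdet.ne', Real.log_pow]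
        set L := Real.log (2 * Real.pi)
        set S := ∑ i, c i * Real.log ((B i * A * (B i)ᵀ).det)
        rw [Finset.sum_congr rfl
          (fun i _ => by ring :
            ∀ i ∈ Finset.univ, (((ni i : ℝ) * L
                - Real.log ((B i * A * (B i)ᵀ).det)) / 2) * c i
              = (c i * (ni i : ℝ)) * (L / 2)
                - (c i * Real.log ((B i * A * (B i)ᵀ).det)) / 2),
          Finset.sum_sub_distrib, ← Finset.sum_mul, ← Finset.sum_div, hdim]
        ring
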